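/- Let f ∈ ℂ[x] be a polynomial of degree n ≥ 2 whose n roots x₁, …, x_n are pairwise distinct (equivalently, f is squarefree of degree n). Then for every natural number p with p ≤ n − 2, the sum over the roots Σ_{i=1}^n x_i^p / f'(x_i) equals 0, where f' denotes the derivative of f; note f'(x_i) ≠ 0 for each root since the roots are simple. -/

import Mathlib

open Polynomial Finset

lemma basis_eq_C_nodalWeight_mul_nodal (s : Finset ℂ) (i : ℂ) :
    Lagrange.basis s id i =
      C (Lagrange.nodalWeight s id i) * Lagrange.nodal (s.erase i) id := by
  simp [Lagrange.basis, Lagrange.basisDivisor, Lagrange.nodalWeight, Lagrange.nodal,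
    prod_mul_distrib]
  exact Or.inl (by rw [← prod_inv_distrib, map_prod])

lemma coeff_basis (s : Finset ℂ) {i : ℂ} (hi : i ∈ s) :
    (Lagrange.basis s id i).coeff (s.card - 1) = Lagrange.nodalWeight s id i := by
  rw [basis_eq_C_nodalWeight_mul_nodal, coeff_C_mul]
  have hdeg : (Lagrange.nodal (s.erase i) id).natDegree = s.card - 1 := by
    rw [Lagrange.natDegree_nodal, card_erase_of_mem hi]
  rw [← hdeg, (Lagrange.nodal_monic).coeff_natDegree, mul_one]

lemma key_sum (s : Finset ℂ) (p : ℕ) (hp : p + 1 < s.card) :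
    ∑ x ∈ s, x ^ p * Lagrange.nodalWeight s id x = 0 := by
  have hinj : Set.InjOn (id : ℂ → ℂ) s := Function.injective_id.injOn
  have h1 : (X ^ p : ℂ[X]) = Lagrange.interpolate s id (fun i => i ^ p) := by
    have hd : (X ^ p : ℂ[X]).degree < s.card := by
      rw [degree_X_pow]
      exact_mod_cast lt_of_lt_of_le (Nat.lt_succ_self p) (le_of_lt hp)
    have := Lagrange.eq_interpolate (f := (X ^ p : ℂ[X])) hinj hd
    simpa using this
  have h2 := congrArg (fun g : ℂ[X] => g.coeff (s.card - 1)) h1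
  simp only [coeff_X_pow] at h2
  rw [if_neg (by omega)] at h2
  rw [Lagrange.interpolate_apply, finset_sum_coeff] at h2
  simp only [coeff_C_mul] at h2
  have h3 : ∑ x ∈ s, x ^ p * Lagrange.nodalWeight s id x
      = ∑ x ∈ s, x ^ p * (Lagrange.basis s id x).coeff (s.card - 1) :=
    Finset.sum_congr rfl fun x hx => by rw [coeff_basis s hx]
  rw [h3]
  exact h2.symm

/-- For a squarefree polynomial `f ∈ ℂ[x]` of degree `n ≥ 2`, whose roots are
therefore pairwise distinct, and every `p ≤ n − 2`, the sum over the roots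
`∑ᵢ xᵢ^p / f'(xᵢ)` vanishes. -/
theorem sum_rootSet_pow_div_derivative_eq_zero (f : Polynomial ℂ)
    (hsf : Squarefree f) (hdeg : 2 ≤ f.natDegree)
    (p : ℕ) (hp : p ≤ f.natDegree - 2) :
    ∑ x ∈ f.roots.toFinset, x ^ p / (Polynomial.derivative f).eval x = 0 := by
  have hf0 : f ≠ 0 := hsf.ne_zero
  have hsep : f.Separable := PerfectField.separable_iff_squarefree.mpr hsf
  have hnodup : f.roots.Nodup := Polynomial.nodup_roots hsep
  have hsplit : f.Splits := IsAlgClosed.splits f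
  set s : Finset ℂ := f.roots.toFinset with hs
  have hcard : s.card = f.natDegree := by
    rw [hs, Multiset.toFinset_card_of_nodup hnodup]
    exact_mod_cast (splits_iff_card_roots.mp hsplit)
  -- f = C leadingCoeff * nodal s id
  have hfe : f = C f.leadingCoeff * Lagrange.nodal s id := by
    conv_lhs => rw [hsplit.eq_prod_roots]
    congr 1
    rw [Lagrange.nodal_eq, hs, Finset.prod_eq_multiset_prod, Multiset.toFinset_val,
      Multiset.dedup_eq_self.mpr hnodup]
    simp
  have hlc : f.leadingCoeff ≠ 0 := leadingCoeff_ne_zero.mpr hf0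
  have hderiv : ∀ x ∈ s, (Polynomial.derivative f).eval x =
      f.leadingCoeff * (Lagrange.nodalWeight s id x)⁻¹ := by
    intro x hx
    have hd : Polynomial.derivative f
        = C f.leadingCoeff * Polynomial.derivative (Lagrange.nodal s id) := by
      conv_lhs => rw [hfe]
      rw [derivative_C_mul]
    rw [hd, eval_mul, eval_C]
    congr 1
    rw [Lagrange.nodalWeight_eq_eval_derivative_nodal hx, inv_inv]
    rfl
  calc ∑ x ∈ s, x ^ p / (Polynomial.derivative f).eval x
      = ∑ x ∈ s, f.leadingCoeff⁻¹ * (x ^ p * Lagrange.nodalWeight s id x) := by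
        refine Finset.sum_congr rfl fun x hx => ?_
        rw [hderiv x hx]
        have hw : Lagrange.nodalWeight s id x ≠ 0 :=
          Lagrange.nodalWeight_ne_zero Function.injective_id.injOn hx
        field_simp
    _ = f.leadingCoeff⁻¹ * ∑ x ∈ s, x ^ p * Lagrange.nodalWeight s id x := by
        rw [Finset.mul_sum]
    _ = 0 := by
        rw [key_sum s p (by omega), mul_zero]
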